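/- Let l, l' be positive real numbers, let α, β̂ be nonzero complex numbers, and let w, x, y, z be complex numbers satisfying |x + z| > (|w + y|/|α|²) · (|l' - l|/(l' + l)). Define x' = w α⁻¹ β̂ (l' - l) - x α β̂ (l' + l) and z' = y α⁻¹ β̂ (l' - l) - z α β̂ (l' + l). Then x' + z' ≠ 0. -/

import Mathlib

open Complex

theorem induction_step_nonvanishing (l l' : ℝ) (hl : 0 < l) (hl' : 0 < l')
    (α βh : ℂ) (hα : α ≠ 0) (hβh : βh ≠ 0)
    (w x y z : ℂ)
    (h : ‖x + z‖ >
      (‖w + y‖ / ‖α‖ ^ 2) * (|l' - l| / (l' + l))) :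
    (w * α⁻¹ * βh * ((l' : ℂ) - l) - x * α * βh * ((l' : ℂ) + l))
      + (y * α⁻¹ * βh * ((l' : ℂ) - l) - z * α * βh * ((l' : ℂ) + l)) ≠ 0 := by
  intro h0
  have h1 : α * α⁻¹ = 1 := mul_inv_cancel₀ hα
  have key : (x + z) * α ^ 2 * βh * ((l' : ℂ) + l)
      = (w + y) * βh * ((l' : ℂ) - l) := by
    linear_combination (-α) * h0 + ((w + y) * βh * ((l' : ℂ) - l)) * h1
  have habs := congrArg (‖·‖) key
  have hc1 : ((l' : ℂ) + l) = ((l' + l : ℝ) : ℂ) := by push_cast; ring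
  have hc2 : ((l' : ℂ) - l) = ((l' - l : ℝ) : ℂ) := by push_cast; ring
  rw [hc1, hc2] at habs
  simp only [norm_mul, norm_pow, Complex.norm_real, Real.norm_eq_abs] at habs
  set X := ‖x + z‖ with hX
  set W := ‖w + y‖ with hW
  set A := ‖α‖ with hA
  set B := ‖βh‖ with hB
  have hA0 : 0 < A := norm_pos_iff.mpr hα
  have hB0 : 0 < B := norm_pos_iff.mpr hβh
  have hS : 0 < l' + l := by linarith
  have hSabs : |l' + l| = l' + l := abs_of_pos hS
  rw [hSabs] at habs
  -- habs : X * A ^ 2 * B * (l' + l) = W * B * |l' - l|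
  have heq : X * A ^ 2 * (l' + l) = W * |l' - l| :=
    mul_right_cancel₀ (ne_of_gt hB0) (by linarith [habs])
  have h' : X * A ^ 2 * (l' + l) > W * |l' - l| := by
    rw [div_mul_div_comm, gt_iff_lt, div_lt_iff₀ (by positivity)] at h
    nlinarith [h]
  linarith [heq, h']
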